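/- arXiv:2604.05153 — 2 statements merged into one kernel-verified Lean document; each statement's English description precedes it below -/
import Mathlib

section
/- Let S be a nonempty finite set and f1, f2 : S → ℝ. Suppose every value of f1 is an integer multiple of some g > 0, and let M be a real number with M·g > max_{s∈S} f2(s) − min_{s∈S} f2(s). Then any maximizer of M·f1 − f2 over S is lexicographically optimal for (max f1, min f2). -/
/-- Big-M weighted-sum correctness (lattice-valued primary objective): if every value of
`f1` is an integer multiple of `g > 0` and `M·g` exceeds the range of `f2`, then any
maximizer of `M·f1 − f2` is lexicographically optimal for `(max f1, min f2)`. -/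
theorem weighted_sum_lex_optimal_lattice {S : Type*} [Fintype S] [Nonempty S]
    (f1 f2 : S → ℝ) (g : ℝ) (hg : 0 < g)
    (hlat : ∀ s : S, ∃ n : ℤ, f1 s = n * g)
    (M : ℝ)
    (hM : M * g > Finset.univ.sup' Finset.univ_nonempty f2
            - Finset.univ.inf' Finset.univ_nonempty f2)
    (sstar : S)
    (hopt : ∀ s : S, M * f1 s - f2 s ≤ M * f1 sstar - f2 sstar) :
    (∀ s : S, f1 s ≤ f1 sstar) ∧
    (∀ s : S, f1 s = f1 sstar → f2 sstar ≤ f2 s) := by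
  constructor
  · intro s
    by_contra hlt
    push_neg at hlt
    obtain ⟨n, hn⟩ := hlat s
    obtain ⟨m, hm⟩ := hlat sstar
    have hnm : (m : ℝ) < n := by
      rw [hn, hm] at hlt
      exact_mod_cast lt_of_mul_lt_mul_right hlt hg.le
    have hnm' : (m : ℝ) + 1 ≤ n := by exact_mod_cast hnm
    have hgap : f1 sstar + g ≤ f1 s := by
      rw [hn, hm]; nlinarith
    have h2s : f2 s ≤ Finset.univ.sup' Finset.univ_nonempty f2 :=
      Finset.le_sup' f2 (Finset.mem_univ s)
    have h2star : Finset.univ.inf' Finset.univ_nonempty f2 ≤ f2 sstar :=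
      Finset.inf'_le f2 (Finset.mem_univ sstar)
    have hMpos : 0 < M := by
      have : (0:ℝ) ≤ Finset.univ.sup' Finset.univ_nonempty f2
          - Finset.univ.inf' Finset.univ_nonempty f2 := by
        have := Finset.inf'_le f2 (Finset.mem_univ sstar)
        have := Finset.le_sup' f2 (Finset.mem_univ sstar)
        linarith
      nlinarith
    have := hopt s
    nlinarith
  · intro s heq
    have := hopt s
    rw [heq] at this
    linarith
end

section
/- Tightness of the big-M bound: there exist a finite set S, functions f1, f2 : S → ℤ, and M₀ = max f2 − min f2 such that the scalarization M₀·f1 − f2 (using weight exactly M₀ instead of M₀ + 1) has a maximizer that is NOT lexicographically optimal for (max f1, min f2). Concretely, S = {A, B} with f1(A) = k−1, f2(A) = 0, f1(B) = k, f2(B) = M₀ > 0 gives equal scalarized values M₀·(k−1) for both, so A maximizes the scalarization but is not lexicographically optimal. -/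
/-- Tightness of the big-M bound: with weight exactly `M₀ = max f2 − min f2` (instead of
`M₀ + 1`), the scalarization can have a maximizer that is not lexicographically optimal.
Here `S = Bool`, `A = false`, `B = true`. -/
theorem bigM_bound_tight (k M0 : ℤ) (hM0 : 0 < M0) :
    let f1 : Bool → ℤ := fun b => if b then k else k - 1
    let f2 : Bool → ℤ := fun b => if b then M0 else 0
    (M0 = Finset.univ.sup' Finset.univ_nonempty f2
          - Finset.univ.inf' Finset.univ_nonempty f2) ∧
    (∀ s : Bool, M0 * f1 s - f2 s ≤ M0 * f1 false - f2 false) ∧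
    ¬ (∀ s : Bool, f1 s ≤ f1 false) := by
  intro f1 f2
  refine ⟨?_, ?_, ?_⟩
  · simp [Finset.sup'_eq_sup, Finset.inf'_eq_inf, f2, Bool.univ_eq]
    omega
  · intro s; cases s <;> simp [f1, f2] <;> ring_nf <;> omega
  · intro h; have := h true; simp [f1] at this
end
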